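/- arXiv:1209.1382 — 3 statements merged into one kernel-verified Lean document; each statement's English description precedes it below -/
import Mathlib

section
/- If a projection P is compatible with an operation Φ (i.e., there exists an instrument I on a finite set Ω and sets X, Y ⊆ Ω with I(X, I) = P and I(Y,·) = Φ(·)), then [Φ(T), P] = 0 for all T ∈ L(K). -/
open Matrix ComplexOrder
open scoped Kronecker

noncomputable section

/-- `n × n` complex matrices, modelling operators on an `n`-dimensional Hilbert space. -/
abbrev Mat (n : ℕ) := Matrix (Fin n) (Fin n) ℂ

/-- An effect: an operator `E` with `0 ≤ E ≤ I` in the Loewner order. -/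
def IsEffect {n : ℕ} (E : Mat n) : Prop := E.PosSemidef ∧ ((1 : Mat n) - E).PosSemidef

/-- The extension `Φ ⊗ id_k` of a map between matrix algebras, acting on block matrices. -/
def cpExt {m n : ℕ} (Φ : Mat m →ₗ[ℂ] Mat n) (k : ℕ)
    (M : Matrix (Fin m × Fin k) (Fin m × Fin k) ℂ) :
    Matrix (Fin n × Fin k) (Fin n × Fin k) ℂ :=
  Matrix.of fun p q => Φ (Matrix.of fun a b => M (a, p.2) (b, q.2)) p.1 q.1

/-- Complete positivity of a linear map between matrix algebras. -/
def IsCP {m n : ℕ} (Φ : Mat m →ₗ[ℂ] Mat n) : Prop :=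
  ∀ (k : ℕ) (M : Matrix (Fin m × Fin k) (Fin m × Fin k) ℂ),
    M.PosSemidef → (cpExt Φ k M).PosSemidef

/- ### Auxiliary lemmas -/

lemma psd_neg_psd_zero {n : ℕ} {M : Mat n} (h1 : M.PosSemidef) (h2 : (-M).PosSemidef) :
    M = 0 := by
  have hv : ∀ x : Fin n → ℂ, M *ᵥ x = 0 := by
    intro x
    rw [← h1.dotProduct_mulVec_zero_iff]
    have a := h1.dotProduct_mulVec_nonneg x
    have b := h2.dotProduct_mulVec_nonneg x
    rw [neg_mulVec, dotProduct_neg] at b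
    have : star x ⬝ᵥ M *ᵥ x ≤ 0 := by rw [← neg_nonneg]; exact b
    exact le_antisymm this a
  ext i j
  have := congrFun (hv (Pi.single j 1)) i
  simpa [mulVec_single] using this

/-- A PSD operator below a multiple of a projection commutes with the projection. -/
lemma commute_of_psd_le {n : ℕ} {A P : Mat n} (c : ℂ)
    (hA : A.PosSemidef) (hPA : (c • P - A).PosSemidef)
    (hP : P.IsHermitian) (hP2 : P * P = P) : Commute A P := by
  obtain ⟨Q, hQ⟩ : ∃ Q : Mat n, Q = 1 - P := ⟨_, rfl⟩
  have hQH : Qᴴ = Q := by simp [hQ, conjTranspose_sub, hP.eq]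
  have hQP : Q * P = 0 := by simp [hQ, sub_mul, hP2]
  have hQAQ : Q * A * Q = 0 := by
    have h1 : (Q * A * Q).PosSemidef := by
      have := hA.mul_mul_conjTranspose_same Q
      rwa [hQH] at this
    have h2 : (-(Q * A * Q)).PosSemidef := by
      have h := hPA.mul_mul_conjTranspose_same Q
      rw [hQH] at h
      have e : Q * (c • P - A) * Q = -(Q * A * Q) := by
        have h0 : Q * (c • P) = 0 := by rw [Matrix.mul_smul, hQP, smul_zero]
        rw [Matrix.mul_sub, Matrix.sub_mul, h0, Matrix.zero_mul, zero_sub]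
      rwa [e] at h
    exact psd_neg_psd_zero h1 h2
  obtain ⟨B, hBH, hBB⟩ : ∃ B : Mat n, Bᴴ = B ∧ B * B = A := by
    open scoped MatrixOrder in
    exact ⟨CFC.sqrt A, (CFC.sqrt_nonneg A).posSemidef.1, CFC.sqrt_mul_sqrt_self A hA.nonneg⟩
  have hBQ : B * Q = 0 := by
    have h : (B * Q)ᴴ * (B * Q) = 0 := by
      rw [conjTranspose_mul, hBH, hQH, Matrix.mul_assoc, ← Matrix.mul_assoc B B Q,
        hBB, ← Matrix.mul_assoc, hQAQ]
    exact conjTranspose_mul_self_eq_zero.mp h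
  have hAQ : A * Q = 0 := by rw [← hBB, Matrix.mul_assoc, hBQ, Matrix.mul_zero]
  have hAP : A * P = A := by
    have h : A * (1 - P) = 0 := hQ ▸ hAQ
    rw [Matrix.mul_sub, Matrix.mul_one, sub_eq_zero] at h
    exact h.symm
  have hPA' : P * A = A := by
    have h := congrArg conjTranspose hAP
    rwa [conjTranspose_mul, hA.1.eq, hP.eq] at h
  rw [Commute, SemiconjBy, hAP, hPA']

/-- Every Hermitian matrix is bounded above and below by a nonnegative multiple of `1`. -/
lemma exists_bound {n : ℕ} {T : Mat n} (hT : T.IsHermitian) :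
    ∃ c : ℝ, 0 ≤ c ∧ ((c : ℂ) • 1 - T).PosSemidef ∧ ((c : ℂ) • 1 + T).PosSemidef := by
  classical
  refine ⟨∑ i, |hT.eigenvalues i|, Finset.sum_nonneg fun i _ => abs_nonneg _, ?_, ?_⟩
  all_goals {
    set c : ℝ := ∑ i, |hT.eigenvalues i| with hc
    have hci : ∀ i, |hT.eigenvalues i| ≤ c :=
      fun i => Finset.single_le_sum (f := fun i => |hT.eigenvalues i|)
        (fun i _ => abs_nonneg _) (Finset.mem_univ i)
    set U : Mat n := (hT.eigenvectorUnitary : Mat n) with hU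
    have hUU : U * star U = 1 := mem_unitaryGroup_iff.mp (hT.eigenvectorUnitary).2
    have spec := hT.spectral_theorem
    rw [Unitary.conjStarAlgAut_apply] at spec
    have h1 : (c : ℂ) • (1 : Mat n) = U * ((c:ℂ) • 1) * star U := by
      rw [Matrix.mul_smul, Matrix.smul_mul, Matrix.mul_one, hUU]
    first
    | (have e : (c : ℂ) • 1 - T
          = U * diagonal (fun i => ((c - hT.eigenvalues i : ℝ) : ℂ)) * star U := by
        conv_lhs => rw [spec, h1]
        rw [← hU, ← Matrix.sub_mul, ← Matrix.mul_sub]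
        congr 2
        ext i j
        by_cases h : i = j <;>
          simp [h, diagonal, one_apply, Complex.ofReal_sub]
       rw [e]
       refine PosSemidef.mul_mul_conjTranspose_same ?_ U
       refine posSemidef_diagonal_iff.mpr fun i => ?_
       rw [Complex.zero_le_real]
       linarith [hci i, neg_abs_le (hT.eigenvalues i), le_abs_self (hT.eigenvalues i)])
    | (have e : (c : ℂ) • 1 + T
          = U * diagonal (fun i => ((c + hT.eigenvalues i : ℝ) : ℂ)) * star U := by
        conv_lhs => rw [spec, h1]
        rw [← hU, ← Matrix.add_mul, ← Matrix.mul_add]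
        congr 2
        ext i j
        by_cases h : i = j <;>
          simp [h, diagonal, one_apply, Complex.ofReal_add]
       rw [e]
       refine PosSemidef.mul_mul_conjTranspose_same ?_ U
       refine posSemidef_diagonal_iff.mpr fun i => ?_
       rw [Complex.zero_le_real]
       linarith [hci i, neg_abs_le (hT.eigenvalues i), le_abs_self (hT.eigenvalues i)])
  }

/-- A completely positive map is in particular positive. -/
lemma IsCP.posSemidef_map {m n : ℕ} {Φ : Mat m →ₗ[ℂ] Mat n} (h : IsCP Φ)
    {T : Mat m} (hT : T.PosSemidef) : (Φ T).PosSemidef := by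
  have hM : (T.submatrix (Prod.fst : Fin m × Fin 1 → Fin m)
      (Prod.fst : Fin m × Fin 1 → Fin m)).PosSemidef := hT.submatrix _
  have h2 := h 1 _ hM
  have key : Φ T = (cpExt Φ 1 (T.submatrix Prod.fst Prod.fst)).submatrix
      (fun i : Fin n => (i, (0 : Fin 1))) (fun i : Fin n => (i, (0 : Fin 1))) := by
    ext i j
    simp only [cpExt, Matrix.submatrix_apply, Matrix.of_apply]
    rfl
  rw [key]
  exact h2.submatrix _

lemma smul_one_psd {k : ℕ} {c : ℝ} (hc : 0 ≤ c) : ((c : ℂ) • (1 : Mat k)).PosSemidef := by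
  have : (c : ℂ) • (1 : Mat k) = diagonal (fun _ => (c : ℂ)) := by
    ext i j; by_cases h : i = j <;> simp [h, one_apply]
  rw [this]
  exact posSemidef_diagonal_iff.mpr fun i => Complex.zero_le_real.mpr hc

/-- If a projection `P` is compatible with an operation `Φ` (both are parts of a single
instrument), then `Φ(T)` commutes with `P` for every `T`. -/
theorem projection_compatible_operation_commutes {m n : ℕ} {Ω : Type*} [Fintype Ω]
    [DecidableEq Ω]
    (I : Ω → (Mat m →ₗ[ℂ] Mat n))
    (hICP : ∀ x, IsCP (I x))
    (hIop : ∀ x, ((1 : Mat n) - I x 1).PosSemidef)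
    (hIunit : (∑ x, I x) (1 : Mat m) = (1 : Mat n))
    (P : Mat n) (hP : P.IsHermitian) (hP2 : P * P = P)
    (Φ : Mat m →ₗ[ℂ] Mat n)
    (X Y : Finset Ω)
    (hPX : (∑ x ∈ X, I x) (1 : Mat m) = P)
    (hΦY : ∀ T : Mat m, Φ T = ∑ x ∈ Y, I x T) :
    ∀ T : Mat m, Commute (Φ T) P := by
  classical
  have hpos : ∀ (F : Finset Ω) (M : Mat m), M.PosSemidef → (∑ x ∈ F, I x M).PosSemidef := by
    intro F M hM
    exact Finset.sum_induction _ _ (fun a b ha hb => ha.add hb) Matrix.PosSemidef.zero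
      (fun x _ => (hICP x).posSemidef_map hM)
  have hPX' : ∑ x ∈ X, I x (1 : Mat m) = P := by
    rw [← hPX, LinearMap.sum_apply]
  have hIunit' : ∑ x, I x (1 : Mat m) = (1 : Mat n) := by
    rw [← hIunit, LinearMap.sum_apply]
  -- key step: `Φ S` commutes with `P` for all PSD `S`
  have hkey : ∀ S : Mat m, S.PosSemidef → Commute (Φ S) P := by
    intro S hS
    obtain ⟨c, hc0, hc1, _⟩ := exists_bound hS.1
    have hXc : ∑ x ∈ X, I x ((c:ℂ) • 1) = (c:ℂ) • P := by
      rw [← hPX', Finset.smul_sum]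
      exact Finset.sum_congr rfl fun x _ => _root_.map_smul _ _ _
    have hUc : ∑ x, I x ((c:ℂ) • 1) = (c:ℂ) • (1 : Mat n) := by
      rw [← hIunit', Finset.smul_sum]
      exact Finset.sum_congr rfl fun x _ => _root_.map_smul _ _ _
    have hcompl : ∑ x ∈ Finset.univ \ X, I x ((c:ℂ) • 1) = (c:ℂ) • ((1 : Mat n) - P) := by
      have h1 : ∑ x ∈ Finset.univ \ X, I x ((c:ℂ)•1) + ∑ x ∈ X, I x ((c:ℂ)•1)
          = ∑ x, I x ((c:ℂ)•1) := Finset.sum_sdiff (Finset.subset_univ X)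
      rw [hXc, hUc] at h1
      rw [smul_sub, ← h1]
      abel
    -- a sub-lemma applicable to both `P` and `1 - P`
    have sub : ∀ (Z : Finset Ω) (P' : Mat n), P'.IsHermitian → P' * P' = P' →
        (∑ x ∈ Z, I x ((c:ℂ) • 1) = (c:ℂ) • P') → ∀ F, F ⊆ Z →
        Commute (∑ x ∈ F, I x S) P' := by
      intro Z P' hP' hP'2 hZ F hFZ
      refine commute_of_psd_le (c:ℂ) (hpos F S hS) ?_ hP' hP'2
      have hdiff : (c:ℂ) • P' - ∑ x ∈ F, I x S
          = ∑ x ∈ Z \ F, I x ((c:ℂ)•1) + ∑ x ∈ F, I x ((c:ℂ)•(1 : Mat m) - S) := by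
        rw [← hZ, ← Finset.sum_sdiff hFZ]
        have : ∑ x ∈ F, I x ((c:ℂ)•(1 : Mat m) - S)
            = ∑ x ∈ F, I x ((c:ℂ)•1) - ∑ x ∈ F, I x S := by
          rw [← Finset.sum_sub_distrib]
          exact Finset.sum_congr rfl fun x _ => _root_.map_sub _ _ _
        rw [this]
        abel
      rw [hdiff]
      exact (hpos (Z \ F) _ (smul_one_psd hc0)).add (hpos F _ hc1)
    have hA : Commute (∑ x ∈ Y ∩ X, I x S) P :=
      sub X P hP hP2 hXc _ Finset.inter_subset_right
    have h1P : ((1 : Mat n) - P).IsHermitian := (isHermitian_one).sub hP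
    have h1P2 : ((1 : Mat n) - P) * ((1 : Mat n) - P) = (1 : Mat n) - P := by
      rw [Matrix.mul_sub, Matrix.mul_one, Matrix.sub_mul, Matrix.one_mul, hP2]
      abel
    have hBc : Commute (∑ x ∈ Y \ X, I x S) ((1 : Mat n) - P) :=
      sub (Finset.univ \ X) _ h1P h1P2 hcompl _
        (Finset.sdiff_subset_sdiff (Finset.subset_univ Y) le_rfl)
    have hB : Commute (∑ x ∈ Y \ X, I x S) P := by
      have h := (Commute.one_right (∑ x ∈ Y \ X, I x S)).sub_right hBc
      simpa using h
    have hsplit : Φ S = ∑ x ∈ Y ∩ X, I x S + ∑ x ∈ Y \ X, I x S := by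
      rw [hΦY S, Finset.sum_inter_add_sum_sdiff]
    rw [hsplit]
    exact hA.add_left hB
  -- commuting for Hermitian arguments
  have hherm : ∀ H : Mat m, H.IsHermitian → Commute (Φ H) P := by
    intro H hH
    obtain ⟨c, hc0, _, hc2⟩ := exists_bound hH
    have e : Φ H = Φ ((c:ℂ) • 1 + H) - Φ ((c:ℂ) • 1) := by
      rw [← _root_.map_sub]; congr 1; abel
    rw [e]
    exact (hkey _ hc2).sub_left (hkey _ (smul_one_psd hc0))
  -- general case via Hermitian decomposition
  intro T
  have h1 : ((2⁻¹ : ℂ) • (T + Tᴴ)).IsHermitian := by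
    show _ᴴ = _
    rw [conjTranspose_smul, conjTranspose_add, conjTranspose_conjTranspose]
    have : star (2⁻¹ : ℂ) = 2⁻¹ := by
      simp [Complex.star_def, map_inv₀]
    rw [this, add_comm]
  have h2 : ((-(2⁻¹) * Complex.I) • (T - Tᴴ)).IsHermitian := by
    show _ᴴ = _
    rw [conjTranspose_smul, conjTranspose_sub, conjTranspose_conjTranspose]
    have hs : star (-(2⁻¹) * Complex.I : ℂ) = (2⁻¹) * Complex.I := by
      simp [Complex.star_def, _root_.map_mul, map_inv₀, Complex.conj_I]
    rw [hs]
    have : (Tᴴ - T) = -(T - Tᴴ) := by abel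
    rw [this, smul_neg, ← neg_smul]
    congr 1
    ring
  have hdecomp : Φ T = Φ ((2⁻¹ : ℂ) • (T + Tᴴ))
      + Complex.I • Φ ((-(2⁻¹) * Complex.I) • (T - Tᴴ)) := by
    rw [← _root_.map_smul, ← _root_.map_add]
    congr 1
    rw [smul_smul]
    have hI : Complex.I * (-(2⁻¹) * Complex.I) = 2⁻¹ := by
      have := Complex.I_mul_I
      calc Complex.I * (-(2⁻¹) * Complex.I) = -(2⁻¹) * (Complex.I * Complex.I) := by ring
        _ = 2⁻¹ := by rw [this]; ring
    rw [hI, smul_add, smul_sub]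
    ext i j
    simp only [Matrix.add_apply, Matrix.sub_apply, Matrix.smul_apply, smul_eq_mul]
    ring
  rw [hdecomp]
  exact (hherm _ h1).add_left ((hherm _ h2).smul_left _)
end
end

section
/- Let Φ be an operation (Schrödinger picture, completely positive and trace-nonincreasing) on a finite-dimensional space such that I − Φ*(I) has rank one, where Φ* is its Heisenberg adjoint. Then a channel Λ satisfies Φ ≤ Λ (Λ − Φ completely positive) if and only if Λ(ρ) = Φ(ρ) + (1 − tr(Φ(ρ)))·ξ for some fixed state ξ. -/
open Matrix ComplexOrder
open scoped Kronecker

noncomputable section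

section helpers
open scoped MatrixOrder in
lemma posSemidef_iff_eq_transpose_mul_self {ι : Type*} [Fintype ι] [DecidableEq ι]
    {A : Matrix ι ι ℂ} : A.PosSemidef ↔ ∃ B : Matrix ι ι ℂ, A = Bᴴ * B := by
  constructor
  · intro hA
    obtain ⟨B, hB⟩ := CStarAlgebra.nonneg_iff_eq_star_mul_self.mp hA.nonneg
    exact ⟨B, hB⟩
  · rintro ⟨B, rfl⟩
    exact posSemidef_conjTranspose_mul_self B

lemma outer_psd {ι : Type*} [Fintype ι] (v : ι → ℂ) : (vecMulVec v (star v)).PosSemidef := by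
  rw [posSemidef_iff_dotProduct_mulVec]
  constructor
  · ext i j
    simp [conjTranspose_apply, vecMulVec_apply, mul_comm]
  · intro x
    have h : star x ⬝ᵥ (vecMulVec v (star v)) *ᵥ x
        = (star x ⬝ᵥ v) * star (star x ⬝ᵥ v) := by
      simp only [dotProduct, mulVec, vecMulVec_apply, Pi.star_apply, star_sum, star_mul',
        star_star, Finset.mul_sum, Finset.sum_mul]
      rw [Finset.sum_comm]
      exact Finset.sum_congr rfl fun i _ => Finset.sum_congr rfl fun j _ => by ring
    rw [h, mul_comm]
    exact star_mul_self_nonneg _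

lemma psd_entry_zero {ι : Type*} [Fintype ι] [DecidableEq ι] {C : Matrix ι ι ℂ}
    (hC : C.PosSemidef) {q : ι} (h : C q q = 0) (p : ι) : C p q = 0 := by
  obtain ⟨B, rfl⟩ := posSemidef_iff_eq_transpose_mul_self.mp hC
  have hz : ∀ r, B r q = 0 := by
    intro r
    have h0 : ∀ r ∈ (Finset.univ : Finset ι), (0:ℂ) ≤ star (B r q) * B r q :=
      fun r _ => star_mul_self_nonneg _
    have := (Finset.sum_eq_zero_iff_of_nonneg h0).mp ?_ r (Finset.mem_univ r)
    · rcases mul_eq_zero.mp this with h' | h'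
      · exact star_eq_zero.mp h'
      · exact h'
    · simpa [mul_apply, conjTranspose_apply] using h
  simp [mul_apply, conjTranspose_apply, hz]

lemma psd_trace_zero {ι : Type*} [Fintype ι] [DecidableEq ι] {C : Matrix ι ι ℂ}
    (hC : C.PosSemidef) (h : C.trace = 0) : C = 0 := by
  have hdiag : ∀ q, C q q = 0 := by
    intro q
    have h0 : ∀ q ∈ (Finset.univ : Finset ι), (0:ℂ) ≤ C q q := by
      intro q _
      obtain ⟨B, rfl⟩ := posSemidef_iff_eq_transpose_mul_self.mp hC
      simp only [mul_apply, conjTranspose_apply]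
      exact Finset.sum_nonneg fun r _ => star_mul_self_nonneg _
    exact (Finset.sum_eq_zero_iff_of_nonneg h0).mp (by simpa [Matrix.trace, Matrix.diag] using h) q
      (Finset.mem_univ q)
  ext p q
  simp [psd_entry_zero hC (hdiag q) p]

lemma cp_outer_block {n m k : ℕ} {Φ : Mat n →ₗ[ℂ] Mat m} (hΦ : IsCP Φ)
    (x : Fin k → Fin n → ℂ) :
    (Matrix.of fun (p q : Fin m × Fin k) =>
      Φ (vecMulVec (x p.2) (star (x q.2))) p.1 q.1).PosSemidef := by
  have hM : (vecMulVec (fun a : Fin n × Fin k => x a.2 a.1)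
      (star (fun a : Fin n × Fin k => x a.2 a.1))).PosSemidef := outer_psd _
  have h := hΦ k _ hM
  convert h using 2
  rfl

lemma cp_outer_psd {n m : ℕ} {Φ : Mat n →ₗ[ℂ] Mat m} (hΦ : IsCP Φ) (u : Fin n → ℂ) :
    (Φ (vecMulVec u (star u))).PosSemidef := by
  have h := cp_outer_block hΦ (k := 1) (fun _ => u)
  have h2 := h.submatrix (fun i : Fin m => (i, (0 : Fin 1)))
  convert h2 using 1
  rfl

lemma trace_mul_outer {ι : Type*} [Fintype ι] (A : Matrix ι ι ℂ) (w : ι → ℂ) :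
    (A * vecMulVec w (star w)).trace = star w ⬝ᵥ (A *ᵥ w) := by
  simp only [Matrix.trace, Matrix.diag_apply, mul_apply, vecMulVec_apply, Pi.star_apply,
    dotProduct, mulVec, Finset.mul_sum]
  exact Finset.sum_congr rfl fun i _ => Finset.sum_congr rfl fun j _ => by ring

lemma outer_mulVec {ι : Type*} [Fintype ι] (u v w : ι → ℂ) :
    vecMulVec u (star v) *ᵥ w = (star v ⬝ᵥ w) • u := by
  funext i
  simp only [mulVec, vecMulVec_apply, Pi.star_apply, dotProduct, Pi.smul_apply, smul_eq_mul,
    Finset.sum_mul]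
  exact Finset.sum_congr rfl fun j _ => by ring
end helpers

/-- Core lemma: a CP map whose trace functional is `ρ ↦ w* ρ w` is `ρ ↦ (w* ρ w) • ξ`
for a state `ξ`. -/
lemma cp_rank_one_trace_structure {n m : ℕ} {Φ' : Mat n →ₗ[ℂ] Mat m} (hΦ' : IsCP Φ')
    {w : Fin n → ℂ} (htr : ∀ ρ : Mat n, (Φ' ρ).trace = star w ⬝ᵥ (ρ *ᵥ w))
    (hcc : star w ⬝ᵥ w ≠ 0) :
    ∃ ξ : Mat m, ξ.PosSemidef ∧ ξ.trace = 1 ∧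
      ∀ ρ : Mat n, Φ' ρ = (star w ⬝ᵥ (ρ *ᵥ w)) • ξ := by
  set cc : ℂ := star w ⬝ᵥ w with hccdef
  have hccnn : (0:ℂ) ≤ cc := dotProduct_star_self_nonneg w
  have hccim : cc.im = 0 := ((Complex.le_def).mp hccnn).2.symm
  have hccstar : star cc = cc := by
    show (starRingEnd ℂ) cc = cc
    exact Complex.conj_eq_iff_im.mpr hccim
  -- Step A : Φ' kills u u* for u ⊥ w
  have stepA : ∀ u : Fin n → ℂ, star w ⬝ᵥ u = 0 → Φ' (vecMulVec u (star u)) = 0 := by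
    intro u hu
    apply psd_trace_zero (cp_outer_psd hΦ' u)
    rw [htr, outer_mulVec, dotProduct_smul, smul_eq_mul, hu, mul_zero]
  -- Step A' : Φ' kills a b* for a, b ⊥ w (polarization)
  have stepA' : ∀ a b : Fin n → ℂ, star w ⬝ᵥ a = 0 → star w ⬝ᵥ b = 0 →
      Φ' (vecMulVec a (star b)) = 0 := by
    intro a b ha hb
    have hperp : ∀ c : ℂ, star w ⬝ᵥ (a + c • b) = 0 := by
      intro c
      rw [dotProduct_add, dotProduct_smul, ha, hb]
      simp
    have hpol : vecMulVec a (star b) = (4⁻¹ : ℂ) •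
        (vecMulVec (a + (1:ℂ) • b) (star (a + (1:ℂ) • b))
          + Complex.I • vecMulVec (a + Complex.I • b) (star (a + Complex.I • b))
          + (-1 : ℂ) • vecMulVec (a + (-1:ℂ) • b) (star (a + (-1:ℂ) • b))
          + (-Complex.I) • vecMulVec (a + (-Complex.I) • b) (star (a + (-Complex.I) • b))) := by
      ext i j
      simp only [vecMulVec_apply, Matrix.smul_apply, Matrix.add_apply, Pi.star_apply,
        Pi.add_apply, Pi.smul_apply, smul_eq_mul, star_add, star_mul', Complex.star_def,
        _root_.map_add, _root_.map_mul, Complex.conj_I, _root_.map_one, _root_.map_neg]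
      ring_nf
      simp [Complex.I_sq]
      ring
    rw [hpol, _root_.map_smul, _root_.map_add, _root_.map_add, _root_.map_add,
      _root_.map_smul, _root_.map_smul, _root_.map_smul,
      stepA _ (hperp 1), stepA _ (hperp Complex.I), stepA _ (hperp (-1)),
      stepA _ (hperp (-Complex.I))]
    simp
  -- Step B : Φ' kills w b* and b w* for b ⊥ w
  have stepB : ∀ b : Fin n → ℂ, star w ⬝ᵥ b = 0 →
      Φ' (vecMulVec w (star b)) = 0 ∧ Φ' (vecMulVec b (star w)) = 0 := by
    intro b hb
    have hC := cp_outer_block hΦ' (k := 2) ![w, b]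
    set C : Matrix (Fin m × Fin 2) (Fin m × Fin 2) ℂ :=
      Matrix.of fun p q => Φ' (vecMulVec (![w, b] p.2) (star (![w, b] q.2))) p.1 q.1 with hCdef
    have hbb : Φ' (vecMulVec b (star b)) = 0 := stepA b hb
    have hdiag : ∀ j : Fin m, C (j, 1) (j, 1) = 0 := by
      intro j
      simp [hCdef, hbb]
    constructor
    · ext i j
      have h1 := psd_entry_zero hC (hdiag j) (i, 0)
      have : Φ' (vecMulVec w (star b)) i j = C (i, 0) (j, 1) := by simp [hCdef]
      rw [this, h1]
      simp
    · ext i j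
      have h1 := psd_entry_zero hC (hdiag i) (j, 0)
      have h2 := congrFun (congrFun hC.1 ((i, 1) : Fin m × Fin 2)) ((j, 0) : Fin m × Fin 2)
      rw [conjTranspose_apply] at h2
      have h3 : Φ' (vecMulVec b (star w)) i j = C (i, 1) (j, 0) := by simp [hCdef]
      rw [h3, ← h2, h1, star_zero]
      simp
  -- the state ξ
  set P : Mat n := vecMulVec w (star w) with hPdef
  have hPtr : (Φ' P).trace = cc * cc := by
    rw [htr, hPdef, outer_mulVec, dotProduct_smul, smul_eq_mul, ← hccdef]
  set ξ : Mat m := (cc * cc)⁻¹ • Φ' P with hξdef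
  have hccre : cc = ((cc.re : ℝ) : ℂ) := by
    apply Complex.ext <;> simp [hccim]
  have hinv_nn : (0:ℂ) ≤ (cc * cc)⁻¹ := by
    have h1 : cc * cc = (((cc.re * cc.re : ℝ)) : ℂ) := by
      apply Complex.ext <;> simp [Complex.mul_re, Complex.mul_im, hccim]
    rw [h1, ← Complex.ofReal_inv, Complex.zero_le_real]
    exact inv_nonneg.mpr (mul_self_nonneg _)
  have hstco : star ((cc * cc)⁻¹) = (cc * cc)⁻¹ := by
    rw [star_inv₀, star_mul', hccstar]
  have hP := cp_outer_psd hΦ' w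
  have hξpsd : ξ.PosSemidef := by
    rw [posSemidef_iff_dotProduct_mulVec]
    constructor
    · show ξᴴ = ξ
      rw [hξdef, conjTranspose_smul, hP.1, hstco]
    · intro x
      rw [hξdef]
      rw [smul_mulVec, dotProduct_smul, smul_eq_mul]
      exact mul_nonneg hinv_nn (hP.dotProduct_mulVec_nonneg x)
  have hξtr : ξ.trace = 1 := by
    rw [hξdef, trace_smul, hPtr, smul_eq_mul, inv_mul_cancel₀ (mul_ne_zero hcc hcc)]
  have hPξ : Φ' P = (cc * cc) • ξ := by
    rw [hξdef, smul_smul, mul_inv_cancel₀ (mul_ne_zero hcc hcc), one_smul]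
  -- the formula on rank-one matrices
  have key : ∀ a b : Fin n → ℂ,
      Φ' (vecMulVec a (star b)) = (star w ⬝ᵥ (vecMulVec a (star b) *ᵥ w)) • ξ := by
    intro a b
    set α : ℂ := cc⁻¹ * (star w ⬝ᵥ a) with hα
    set β : ℂ := cc⁻¹ * (star w ⬝ᵥ b) with hβ
    set a' : Fin n → ℂ := a - α • w with ha'
    set b' : Fin n → ℂ := b - β • w with hb'
    have hwa : star w ⬝ᵥ a = cc * α := by rw [hα]; field_simp
    have hwb : star w ⬝ᵥ b = cc * β := by rw [hβ]; field_simp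
    have ha'perp : star w ⬝ᵥ a' = 0 := by
      rw [ha', dotProduct_sub, dotProduct_smul, smul_eq_mul, hwa, ← hccdef]
      ring
    have hb'perp : star w ⬝ᵥ b' = 0 := by
      rw [hb', dotProduct_sub, dotProduct_smul, smul_eq_mul, hwb, ← hccdef]
      ring
    have hdecomp : vecMulVec a (star b) = (α * star β) • P + α • vecMulVec w (star b')
        + star β • vecMulVec a' (star w) + vecMulVec a' (star b') := by
      have ha2 : ∀ i, a i = a' i + α * w i := fun i => by simp [ha']
      have hb2 : ∀ j, b j = b' j + β * w j := fun j => by simp [hb']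
      ext i j
      simp only [vecMulVec_apply, Matrix.add_apply, Matrix.smul_apply, Pi.star_apply,
        smul_eq_mul, hPdef]
      rw [ha2 i, hb2 j]
      simp only [star_add, star_mul']
      ring
    have hcoef : star w ⬝ᵥ (vecMulVec a (star b) *ᵥ w) = α * star β * (cc * cc) := by
      rw [outer_mulVec, dotProduct_smul, smul_eq_mul]
      have hsb : star b ⬝ᵥ w = star (star w ⬝ᵥ b) := by
        simp only [dotProduct, star_sum, star_mul', star_star, Pi.star_apply]
        exact Finset.sum_congr rfl fun x _ => by ring
      rw [hsb, hwb, hwa, star_mul', hccstar]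
      ring
    rw [hcoef, hdecomp, _root_.map_add, _root_.map_add, _root_.map_add, _root_.map_smul,
      _root_.map_smul, _root_.map_smul, (stepB b' hb'perp).1, (stepB a' ha'perp).2,
      stepA' a' b' ha'perp hb'perp, hPξ]
    simp [smul_smul]
  -- extension to all matrices by linearity
  refine ⟨ξ, hξpsd, hξtr, ?_⟩
  intro ρ
  have hc : ∀ i j, star w ⬝ᵥ (vecMulVec (Pi.single i 1) (star (Pi.single j (1:ℂ))) *ᵥ w)
      = star (w i) * w j := by
    intro i j
    rw [outer_mulVec, dotProduct_smul, smul_eq_mul]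
    simp [dotProduct, Pi.single_apply, apply_ite (starRingEnd ℂ)]
    ring
  have hsingle : ∀ j : Fin n, star ((Pi.single j (1:ℂ)) : Fin n → ℂ) = Pi.single j 1 := by
    intro j
    funext x
    simp only [Pi.star_apply, Pi.single_apply]
    split <;> simp
  calc Φ' ρ = Φ' (∑ i, ∑ j, Matrix.single i j (ρ i j)) := by
        rw [← matrix_eq_sum_single ρ]
    _ = ∑ i, ∑ j, (ρ i j) • Φ' (vecMulVec (Pi.single i 1) (star (Pi.single j (1:ℂ)))) := by
        rw [map_sum]
        refine Finset.sum_congr rfl fun i _ => ?_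
        rw [map_sum]
        refine Finset.sum_congr rfl fun j _ => ?_
        rw [show Matrix.single i j (ρ i j) = (ρ i j) • Matrix.single i j (1:ℂ) from by
          rw [smul_single, smul_eq_mul, mul_one], _root_.map_smul,
          single_eq_single_vecMulVec_single, hsingle j]
    _ = ∑ i, ∑ j, ((ρ i j) * (star (w i) * w j)) • ξ := by
        refine Finset.sum_congr rfl fun i _ => Finset.sum_congr rfl fun j _ => ?_
        rw [key, hc, smul_smul]
    _ = (∑ i, ∑ j, (ρ i j) * (star (w i) * w j)) • ξ := by
        rw [Finset.sum_smul]
        exact Finset.sum_congr rfl fun i _ => by rw [Finset.sum_smul]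
    _ = (star w ⬝ᵥ (ρ *ᵥ w)) • ξ := by
        congr 1
        simp only [dotProduct, mulVec, Pi.star_apply, Finset.mul_sum]
        exact Finset.sum_congr rfl fun i _ => Finset.sum_congr rfl fun j _ => by ring
lemma sum4_swap {α β γ δ M : Type*} [Fintype α] [Fintype β] [Fintype γ] [Fintype δ]
    [AddCommMonoid M] (f : α → β → γ → δ → M) :
    (∑ a, ∑ b, ∑ s, ∑ r, f a b s r) = ∑ s, ∑ r, ∑ a, ∑ b, f a b s r := by
  calc (∑ a, ∑ b, ∑ s, ∑ r, f a b s r)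
      = ∑ a, ∑ s, ∑ b, ∑ r, f a b s r :=
        Finset.sum_congr rfl fun a _ => Finset.sum_comm
    _ = ∑ s, ∑ a, ∑ b, ∑ r, f a b s r := Finset.sum_comm
    _ = ∑ s, ∑ a, ∑ r, ∑ b, f a b s r :=
        Finset.sum_congr rfl fun s _ => Finset.sum_congr rfl fun a _ => Finset.sum_comm
    _ = ∑ s, ∑ r, ∑ a, ∑ b, f a b s r :=
        Finset.sum_congr rfl fun s _ => Finset.sum_comm

lemma kron_conjTranspose {l p q r : Type*} (A : Matrix l p ℂ) (B : Matrix q r ℂ) :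
    (A ⊗ₖ B)ᴴ = Aᴴ ⊗ₖ Bᴴ := by
  ext ⟨i, s⟩ ⟨j, t⟩
  simp [conjTranspose_apply, kroneckerMap_apply, star_mul', mul_comm]

lemma kron_psd {a b : Type*} [Fintype a] [Fintype b] [DecidableEq a] [DecidableEq b]
    {A : Matrix a a ℂ} {B : Matrix b b ℂ} (hA : A.PosSemidef) (hB : B.PosSemidef) :
    (A ⊗ₖ B).PosSemidef := by
  obtain ⟨S, rfl⟩ := posSemidef_iff_eq_transpose_mul_self.mp hA
  obtain ⟨T, rfl⟩ := posSemidef_iff_eq_transpose_mul_self.mp hB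
  rw [mul_kronecker_mul, ← kron_conjTranspose]
  exact posSemidef_conjTranspose_mul_self _

/-- `ρ ↦ tr(ρF)·ξ` is completely positive for `F, ξ` PSD. -/
lemma isCP_trace_smul {n m : ℕ} {F : Mat n} (hF : F.PosSemidef) {ξ : Mat m}
    (hξ : ξ.PosSemidef) (Ψ : Mat n →ₗ[ℂ] Mat m)
    (hΨ : ∀ ρ : Mat n, Ψ ρ = (ρ * F).trace • ξ) : IsCP Ψ := by
  intro k M hM
  obtain ⟨A, hA⟩ := posSemidef_iff_eq_transpose_mul_self.mp hF
  obtain ⟨T, hT⟩ := posSemidef_iff_eq_transpose_mul_self.mp hM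
  set N : Matrix (Fin k) (Fin k) ℂ :=
    Matrix.of fun p q => ((Matrix.of fun a b => M (a, p) (b, q) : Mat n) * F).trace with hNdef
  have hext : cpExt Ψ k M = ξ ⊗ₖ N := by
    ext ⟨i, p⟩ ⟨j, q⟩
    simp only [cpExt, Matrix.of_apply, hΨ, Matrix.smul_apply, smul_eq_mul,
      kroneckerMap_apply, hNdef]
    ring
  rw [hext]
  refine kron_psd hξ ?_
  set G : Matrix ((Fin n × Fin k) × Fin n) (Fin k) ℂ :=
    Matrix.of fun sr q => ∑ b, T sr.1 (b, q) * star (A sr.2 b) with hGdef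
  have hNG : N = Gᴴ * G := by
    ext p q
    show ((Matrix.of fun a b => M (a, p) (b, q) : Mat n) * F).trace = (Gᴴ * G) p q
    calc ((Matrix.of fun a b => M (a, p) (b, q) : Mat n) * F).trace
        = ∑ a, ∑ b, M (a, p) (b, q) * F b a := by
          simp only [Matrix.trace, Matrix.diag_apply, mul_apply, Matrix.of_apply]
      _ = ∑ a, ∑ b, ∑ s, ∑ r,
            (star (T s (a, p)) * T s (b, q)) * (star (A r b) * A r a) := by
          refine Finset.sum_congr rfl fun a _ => Finset.sum_congr rfl fun b _ => ?_
          rw [hT, hA]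
          simp only [mul_apply, conjTranspose_apply]
          rw [Finset.sum_mul_sum]
      _ = ∑ s, ∑ r, ∑ a, ∑ b,
            (star (T s (a, p)) * T s (b, q)) * (star (A r b) * A r a) := sum4_swap _
      _ = (Gᴴ * G) p q := by
          symm
          rw [mul_apply, Fintype.sum_prod_type]
          refine Finset.sum_congr rfl fun s _ => Finset.sum_congr rfl fun r _ => ?_
          simp only [conjTranspose_apply, hGdef, Matrix.of_apply]
          rw [star_sum, Finset.sum_mul_sum]
          refine Finset.sum_congr rfl fun a _ => Finset.sum_congr rfl fun b _ => ?_
          rw [star_mul', star_star]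
          ring
  rw [hNG]
  exact posSemidef_conjTranspose_mul_self _
lemma rank_one_psd {n : ℕ} {F : Mat n} (hF : F.PosSemidef) (hr : F.rank = 1) :
    ∃ w : Fin n → ℂ, F = vecMulVec w (star w) ∧ star w ⬝ᵥ w ≠ 0 := by
  have hH := hF.1
  have hcard : Fintype.card {i // hH.eigenvalues i ≠ 0} = 1 := by
    rw [← hH.rank_eq_card_non_zero_eigs, hr]
  obtain ⟨⟨i0, hi0⟩, huniq⟩ := Fintype.card_eq_one_iff.mp hcard
  have heig0 : ∀ i, i ≠ i0 → hH.eigenvalues i = 0 := by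
    intro i hi
    by_contra h
    exact hi (congrArg Subtype.val (huniq ⟨i, h⟩))
  set U : Mat n := (hH.eigenvectorUnitary : Mat n) with hU
  set lam : ℝ := hH.eigenvalues i0 with hlam
  have hlampos : 0 < lam := lt_of_le_of_ne (hF.eigenvalues_nonneg i0) (Ne.symm hi0)
  have hsqrt : ((Real.sqrt lam : ℂ)) * ((Real.sqrt lam : ℂ)) = (lam : ℂ) := by
    rw [← Complex.ofReal_mul, Real.mul_self_sqrt hlampos.le]
  set w : Fin n → ℂ := fun j => (Real.sqrt lam : ℂ) * U j i0 with hw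
  have hUcol : ¬ (∀ j, U j i0 = 0) := by
    intro hc
    have h1 : (star U * U) i0 i0 = 1 := by
      rw [Matrix.mem_unitaryGroup_iff'.mp hH.eigenvectorUnitary.2]
      simp
    rw [mul_apply] at h1
    simp only [star_apply] at h1
    rw [Finset.sum_eq_zero (fun j _ => by rw [hc j]; simp)] at h1
    exact zero_ne_one h1
  refine ⟨w, ?_, ?_⟩
  · have hspec := hH.spectral_theorem
    ext j k
    rw [hspec, Unitary.conjStarAlgAut_apply]
    simp only [mul_apply, star_apply, diagonal_apply, Function.comp_apply, mul_ite, mul_zero,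
      ite_mul, zero_mul, Finset.sum_ite_eq', Finset.mem_univ, if_true]
    rw [Finset.sum_eq_single i0]
    · simp only [vecMulVec_apply, hw, Pi.star_apply, star_mul', RCLike.star_def,
        Complex.conj_ofReal]
      rw [show ((RCLike.ofReal (hH.eigenvalues i0) : ℂ)) = (lam : ℂ) from rfl, ← hsqrt]
      ring
    · intro i _ hi
      simp [heig0 i hi]
    · intro h
      exact absurd (Finset.mem_univ i0) h
  · rw [Ne, dotProduct_star_self_eq_zero]
    intro hc
    apply hUcol
    intro j
    have := congrFun hc j
    simp only [hw, Pi.zero_apply] at this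
    rcases mul_eq_zero.mp this with h' | h'
    · exfalso
      exact (Real.sqrt_ne_zero'.mpr hlampos) (by exact_mod_cast h')
    · exact h'

/-- For an operation `Φ` with `I - Φ*(I)` of rank one, a channel `Λ` dominates `Φ` in
the completely positive order iff `Λ(ρ) = Φ(ρ) + (tr ρ - tr Φ(ρ))·ξ` for a state `ξ`. -/
theorem channel_above_rank_one_deficiency_operation {n m : ℕ}
    (Φ : Mat n →ₗ[ℂ] Mat m) (hΦ : IsCP Φ)
    (E : Mat n) (hE : ∀ ρ : Mat n, (Φ ρ).trace = (ρ * E).trace)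
    (hE1pos : ((1 : Mat n) - E).PosSemidef)
    (hrank : ((1 : Mat n) - E).rank = 1)
    (Λ : Mat n →ₗ[ℂ] Mat m) (hΛ : IsCP Λ) (hΛtr : ∀ ρ : Mat n, (Λ ρ).trace = ρ.trace) :
    IsCP (Λ - Φ) ↔
      ∃ ξ : Mat m, ξ.PosSemidef ∧ ξ.trace = 1 ∧
        ∀ ρ : Mat n, Λ ρ = Φ ρ + (ρ.trace - (Φ ρ).trace) • ξ := by
  have htrF : ∀ ρ : Mat n, ((Λ - Φ) ρ).trace = (ρ * ((1 : Mat n) - E)).trace := by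
    intro ρ
    rw [LinearMap.sub_apply, trace_sub, hΛtr, hE, mul_sub, mul_one, trace_sub]
  have hcoefF : ∀ ρ : Mat n, ρ.trace - (Φ ρ).trace = (ρ * ((1 : Mat n) - E)).trace := by
    intro ρ
    rw [hE, mul_sub, mul_one, trace_sub]
  constructor
  · intro h
    obtain ⟨w, hFw, hcc⟩ := rank_one_psd hE1pos hrank
    have htr' : ∀ ρ : Mat n, ((Λ - Φ) ρ).trace = star w ⬝ᵥ (ρ *ᵥ w) := by
      intro ρ
      rw [htrF, hFw, trace_mul_outer]
    obtain ⟨ξ, hξpsd, hξtr, hform⟩ := cp_rank_one_trace_structure h htr' hcc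
    refine ⟨ξ, hξpsd, hξtr, fun ρ => ?_⟩
    have h1 : Λ ρ = Φ ρ + (Λ - Φ) ρ := by
      rw [LinearMap.sub_apply]
      abel
    have h2 : ρ.trace - (Φ ρ).trace = star w ⬝ᵥ (ρ *ᵥ w) := by
      rw [← hΛtr ρ, ← trace_sub, ← LinearMap.sub_apply, htr']
    rw [h1, hform, h2]
  · rintro ⟨ξ, hξpsd, hξtr, hform⟩
    refine isCP_trace_smul hE1pos hξpsd (Λ - Φ) ?_
    intro ρ
    rw [LinearMap.sub_apply, hform ρ, ← hcoefF]
    abel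
end
end

section
/- Let P_x = (I+σ_x)/2 and P_z = (I+σ_z)/2 on ℂ². There is no channel Λ on 2×2 matrices such that both Λ − Φ₁ and Λ − Φ₂ are completely positive, where Φ₁(ρ) = P_x ρ P_x and Φ₂(ρ) = P_z ρ P_z. That is, Φ₁ and Φ₂ have no common upper bound among channels (they are strongly incompatible). -/
open Matrix ComplexOrder
open scoped Kronecker

noncomputable section

/-- Lüders-type conjugation map `ρ ↦ A * ρ * A` (for self-adjoint `A`). -/
def luders {n : ℕ} (A : Mat n) : Mat n →ₗ[ℂ] Mat n :=
  (LinearMap.mulRight ℂ A).comp (LinearMap.mulLeft ℂ A)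

/-- Pauli `σ_x`. -/
def sx : Mat 2 := !![0, 1; 1, 0]
/-- Pauli `σ_z`. -/
def sz : Mat 2 := !![1, 0; 0, -1]

/-- `P_x = (I + σ_x)/2`. -/
def Px : Mat 2 := ((1 : ℂ) / 2) • ((1 : Mat 2) + sx)
/-- `P_z = (I + σ_z)/2`. -/
def Pz : Mat 2 := ((1 : ℂ) / 2) • ((1 : Mat 2) + sz)

/-- A CP map is in particular positive (take `k = 1`). -/
lemma isCP_pos {Φ : Mat 2 →ₗ[ℂ] Mat 2} (h : IsCP Φ) {ρ : Mat 2}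
    (hρ : ρ.PosSemidef) : (Φ ρ).PosSemidef := by
  have hM : (ρ.submatrix (Prod.fst : Fin 2 × Fin 1 → Fin 2) Prod.fst).PosSemidef :=
    hρ.submatrix _
  have h2 := h 1 _ hM
  exact h2.submatrix (fun i : Fin 2 => (i, (0 : Fin 1)))

lemma Px_eq : Px = !![(2:ℂ)⁻¹, 2⁻¹; 2⁻¹, 2⁻¹] := by
  simp [Px, sx, one_fin_two]

lemma Px_psd : Px.PosSemidef := by
  have h : Px = Pxᴴ * Px := by
    ext i j; fin_cases i <;> fin_cases j <;>
      simp [Px_eq, Matrix.conjTranspose_apply, Matrix.mul_apply, Fin.sum_univ_two] <;> norm_num [map_ofNat]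
  rw [h]
  exact posSemidef_conjTranspose_mul_self Px

lemma PxPxPx : Px * Px * Px = Px := by
  rw [Px_eq]
  ext i j; fin_cases i <;> fin_cases j <;>
    simp [Matrix.mul_apply, Fin.sum_univ_two] <;> norm_num

lemma PzPxPz : Pz * Px * Pz = !![(2:ℂ)⁻¹, 0; 0, 0] := by
  rw [Px_eq]
  have hz : Pz = !![1, 0; 0, 0] := by
    ext i j; fin_cases i <;> fin_cases j <;> simp [Pz, sz, one_fin_two] <;> norm_num
  rw [hz]
  ext i j; fin_cases i <;> fin_cases j <;>
    simp [Matrix.mul_apply, Fin.sum_univ_two] <;> norm_num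

/-- The Lüders operations of `P_x` and `P_z` have no common channel upper bound in the
completely positive order: they are strongly incompatible. -/
theorem luders_Px_Pz_strongly_incompatible :
    ¬ ∃ Λ : Mat 2 →ₗ[ℂ] Mat 2, IsCP Λ ∧ (∀ ρ : Mat 2, (Λ ρ).trace = ρ.trace) ∧
        IsCP (Λ - luders Px) ∧ IsCP (Λ - luders Pz) := by
  rintro ⟨Λ, -, htr, h1, h2⟩
  -- D = Λ Px - Px is PSD
  have hD : ((Λ - luders Px) Px).PosSemidef := isCP_pos h1 Px_psd
  have hE : ((Λ - luders Pz) Px).PosSemidef := isCP_pos h2 Px_psd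
  have hDval : (Λ - luders Px) Px = Λ Px - Px := by
    simp [luders, LinearMap.sub_apply, LinearMap.mulRight_apply, LinearMap.mulLeft_apply,
      PxPxPx]
  have hEval : (Λ - luders Pz) Px = Λ Px - !![(2:ℂ)⁻¹, 0; 0, 0] := by
    simp [luders, LinearMap.sub_apply, LinearMap.mulRight_apply, LinearMap.mulLeft_apply,
      PzPxPz]
  set L := Λ Px with hL
  -- trace condition
  have htrPx : Px.trace = 1 := by
    rw [Px_eq]; norm_num [Matrix.trace, Fin.sum_univ_two, Matrix.diag]
  have htrL : L 0 0 + L 1 1 = 1 := by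
    have h := htr Px
    rw [htrPx] at h
    simpa [Matrix.trace, Fin.sum_univ_two, Matrix.diag] using h
  -- quadratic form inequalities
  have q1 := hD.dotProduct_mulVec_nonneg ![1, 1]
  have q2 := hE.dotProduct_mulVec_nonneg ![1, -1]
  rw [hDval] at q1
  rw [hEval] at q2
  have e1 : star (![1, 1] : Fin 2 → ℂ) ⬝ᵥ ((L - Px) *ᵥ ![1, 1]) =
      L 0 0 + L 0 1 + L 1 0 + L 1 1 - 2 := by
    rw [Px_eq]
    simp [dotProduct, Matrix.mulVec, Fin.sum_univ_two, Matrix.sub_apply]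
    ring
  have e2 : star (![1, -1] : Fin 2 → ℂ) ⬝ᵥ ((L - !![(2:ℂ)⁻¹, 0; 0, 0]) *ᵥ ![1, -1]) =
      L 0 0 - L 0 1 - L 1 0 + L 1 1 - 2⁻¹ := by
    simp [dotProduct, Matrix.mulVec, Fin.sum_univ_two, Matrix.sub_apply]
    ring
  rw [e1] at q1
  rw [e2] at q2
  have hsum : (L 0 0 + L 0 1 + L 1 0 + L 1 1 - 2) +
      (L 0 0 - L 0 1 - L 1 0 + L 1 1 - 2⁻¹) = -2⁻¹ := by
    linear_combination (2 : ℂ) * htrL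
  have : (0 : ℂ) ≤ -2⁻¹ := hsum ▸ add_nonneg q1 q2
  rw [Complex.le_def] at this
  norm_num at this
end
end
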